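/- For every real ν ≥ 0, every real α with |α| ≤ 1, every t ≥ 0 and every ξ ≥ 0, the series ∑_{n=1}^∞ (ν+n) |C_n^ν(α)| e^{−n(n+2ν)t} φ_{ν,n}(ξ) converges and its sum is at most ρ_ν 2^{−ν} e^{3ξ}. -/

import Mathlib

/-- For real `ν ≥ 0` and integer `n ≥ 0`, the function
`φ_{ν,n}(ξ) = ∑_{m=0}^∞ ξ^(n+2m) / (2^(ν+n+2m) Γ(m+1) Γ(ν+n+m+1))`. -/
noncomputable def phiBessel (ν : ℝ) (n : ℕ) (ξ : ℝ) : ℝ :=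
  ∑' m : ℕ, ξ ^ (n + 2 * m) /
    ((2 : ℝ) ^ (ν + n + 2 * (m : ℝ)) * Real.Gamma ((m : ℝ) + 1) * Real.Gamma (ν + n + m + 1))

/-- The Gegenbauer polynomial `C_n^ν` for `ν ≥ 0`: for `ν > 0`,
`C_n^ν(x) = (1/Γ(ν)) ∑_{m=0}^{⌊n/2⌋} (−1)^m Γ(ν+n−m) (2x)^(n−2m) / (m! (n−2m)!)`;
for `ν = 0`, `C_0^0(x) = 1` and, for `n ≥ 1`,
`C_n^0(x) = ∑_{m=0}^{⌊n/2⌋} (−1)^m Γ(n−m) (2x)^(n−2m) / (Γ(m+1) Γ(n−2m+1))`. -/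
noncomputable def gegenbauer (ν : ℝ) (n : ℕ) (x : ℝ) : ℝ :=
  if ν = 0 then
    (if n = 0 then 1 else
      ∑ m ∈ Finset.range (n / 2 + 1),
        (-1 : ℝ) ^ m * Real.Gamma ((n : ℝ) - m) * (2 * x) ^ (n - 2 * m) /
          (Real.Gamma ((m : ℝ) + 1) * Real.Gamma ((n : ℝ) - 2 * m + 1)))
  else
    (1 / Real.Gamma ν) * ∑ m ∈ Finset.range (n / 2 + 1),
      (-1 : ℝ) ^ m * Real.Gamma (ν + n - m) * (2 * x) ^ (n - 2 * m) /
        ((m.factorial : ℝ) * ((n - 2 * m).factorial : ℝ))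

/-- `ρ_0 = 1` and `ρ_ν = 1/Γ(ν)` for `ν > 0`. -/
noncomputable def rhoNu (ν : ℝ) : ℝ := if ν = 0 then 1 else 1 / Real.Gamma ν


open Real Finset


lemma gamma_add_nat (x : ℝ) (hx : 0 < x) (k : ℕ) :
    Real.Gamma (x + k) = Real.Gamma x * ∏ i ∈ Finset.range k, (x + i) := by
  induction k with
  | zero => simp
  | succ k ih =>
    have h : x + ((k : ℕ) + 1 : ℕ) = (x + k) + 1 := by push_cast; ring
    rw [h, Real.Gamma_add_one (by positivity), ih, Finset.prod_range_succ]; ring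

lemma fact_le_prod (x : ℝ) (hx : 1 ≤ x) (k : ℕ) :
    (k.factorial : ℝ) ≤ ∏ i ∈ Finset.range k, (x + i) := by
  calc (k.factorial : ℝ) = ∏ i ∈ Finset.range k, ((i : ℝ) + 1) := by
        rw [← Finset.prod_range_add_one_eq_factorial]; push_cast; rfl
    _ ≤ ∏ i ∈ Finset.range k, (x + i) := by
        apply Finset.prod_le_prod (fun i _ => by positivity) (fun i _ => by linarith)

lemma keyL (ν : ℝ) (hν : 0 ≤ ν) (N j m : ℕ) (hN : 1 ≤ N) (hj : 2 * j ≤ N) :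
    (ν + N) * Real.Gamma (ν + N - j) * ((j.factorial : ℝ) * m.factorial) ≤
      Real.Gamma (ν + N + m + 1) := by
  have hjN : j + 1 ≤ N := by omega
  set x : ℝ := ν + N - j with hxdef
  have hx1 : 1 ≤ x := by
    have : (j : ℝ) + 1 ≤ (N : ℝ) := by exact_mod_cast hjN
    simp only [hxdef]; linarith
  have hx : 0 < x := by linarith
  have hsplit : ν + N + m + 1 = x + ((j + (m + 1) : ℕ) : ℝ) := by
    simp only [hxdef]; push_cast; ring
  rw [hsplit, gamma_add_nat x hx]
  rw [Finset.prod_range_add]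
  rw [Finset.prod_range_succ']
  have hΓx : Real.Gamma (ν + N - j) = Real.Gamma x := rfl
  rw [hΓx]
  have h1 : (j.factorial : ℝ) ≤ ∏ i ∈ Finset.range j, (x + i) := fact_le_prod x hx1 j
  have h2 : (m.factorial : ℝ) ≤ ∏ i ∈ Finset.range m, (x + (j + (i + 1) : ℕ)) := by
    calc (m.factorial : ℝ) ≤ ∏ i ∈ Finset.range m, ((x + j + 1) + i) := by
          apply fact_le_prod; linarith [Nat.cast_nonneg (α := ℝ) j]
      _ = ∏ i ∈ Finset.range m, (x + (j + (i + 1) : ℕ)) := by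
          apply Finset.prod_congr rfl; intro i _; push_cast; ring
  have hxj : x + ((j : ℕ) + 0 : ℕ) = ν + N := by simp only [hxdef]; push_cast; ring
  rw [hxj]
  have hΓpos : 0 < Real.Gamma x := Real.Gamma_pos_of_pos hx
  have hp1 : (0:ℝ) < ∏ i ∈ Finset.range j, (x + i) := by
    apply Finset.prod_pos; intro i _; have : (0:ℝ) ≤ i := Nat.cast_nonneg i; linarith
  have hνN : (0:ℝ) < ν + N := by
    have : (1:ℝ) ≤ N := by exact_mod_cast hN
    linarith
  calc (ν + N) * Real.Gamma x * ((j.factorial : ℝ) * m.factorial)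
      ≤ (ν + N) * Real.Gamma x * ((∏ i ∈ Finset.range j, (x + i)) *
          ∏ i ∈ Finset.range m, (x + (j + (i + 1) : ℕ))) := by
        apply mul_le_mul_of_nonneg_left _ (by positivity)
        apply mul_le_mul h1 h2 (by positivity) (le_of_lt hp1)
    _ = Real.Gamma x * ((∏ i ∈ Finset.range j, (x + i)) *
          ((∏ i ∈ Finset.range m, (x + (j + (i + 1) : ℕ))) * (ν + N))) := by ring


lemma two_j_fact_le (j : ℕ) : ((2 * j).factorial : ℝ) ≤ 4 ^ j * (j.factorial : ℝ) ^ 2 := by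
  have h : (2 * j).factorial ≤ 4 ^ j * j.factorial ^ 2 := by
    induction j with
    | zero => simp
    | succ j ih =>
      have h1 : 2 * (j + 1) = 2 * j + 1 + 1 := by ring
      rw [h1, Nat.factorial_succ, Nat.factorial_succ, Nat.factorial_succ]
      calc (2 * j + 1 + 1) * ((2 * j + 1) * (2 * j).factorial)
          ≤ (2 * j + 2) * ((2 * j + 2) * (4 ^ j * j.factorial ^ 2)) := by
            apply Nat.mul_le_mul (by omega)
            exact Nat.mul_le_mul (by omega) ih
        _ = 4 ^ (j + 1) * ((j + 1) * j.factorial) ^ 2 := by ring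
  calc ((2 * j).factorial : ℝ) ≤ ((4 ^ j * j.factorial ^ 2 : ℕ) : ℝ) := by exact_mod_cast h
    _ = 4 ^ j * (j.factorial : ℝ) ^ 2 := by push_cast; ring

lemma tsum_sq_le_exp (x : ℝ) (hx : 0 ≤ x) :
    ∑' m : ℕ, (x ^ 2 / 4) ^ m / ((m.factorial : ℝ)) ^ 2 ≤ Real.exp x := by
  apply Real.tsum_le_of_sum_range_le (fun m => by positivity)
  intro M
  calc ∑ m ∈ Finset.range M, (x ^ 2 / 4) ^ m / ((m.factorial : ℝ)) ^ 2
      ≤ ∑ m ∈ Finset.range M, x ^ (2 * m) / ((2 * m).factorial : ℝ) := by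
        apply Finset.sum_le_sum
        intro m _
        rw [div_le_div_iff₀ (by positivity) (by positivity)]
        have h4 : ((2 * m).factorial : ℝ) ≤ 4 ^ m * (m.factorial : ℝ) ^ 2 := two_j_fact_le m
        have hp : (x ^ 2 / 4) ^ m = x ^ (2 * m) / 4 ^ m := by
          rw [div_pow, ← pow_mul]
        rw [hp]
        calc x ^ (2 * m) / 4 ^ m * ((2 * m).factorial : ℝ)
            ≤ x ^ (2 * m) / 4 ^ m * (4 ^ m * (m.factorial : ℝ) ^ 2) := by
              apply mul_le_mul_of_nonneg_left h4 (by positivity)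
          _ = x ^ (2 * m) * (m.factorial : ℝ) ^ 2 := by field_simp
    _ = ∑ k ∈ (Finset.range M).image (fun m => 2 * m), x ^ k / (k.factorial : ℝ) := by
        rw [Finset.sum_image (by intros a _ b _ h; have h' : 2 * a = 2 * b := h; omega)]
    _ ≤ ∑ k ∈ Finset.range (2 * M), x ^ k / (k.factorial : ℝ) := by
        apply Finset.sum_le_sum_of_subset_of_nonneg
        · intro k hk
          simp only [Finset.mem_image, Finset.mem_range] at hk ⊢
          obtain ⟨a, ha, rfl⟩ := hk; omega
        · intro k _ _; positivity
    _ ≤ Real.exp x := Real.sum_le_exp_of_nonneg hx _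

lemma summable_sq (x : ℝ) : Summable (fun m : ℕ => (x ^ 2 / 4) ^ m / ((m.factorial : ℝ)) ^ 2) := by
  apply Summable.of_nonneg_of_le (fun m => by positivity) _
    (Real.summable_pow_div_factorial (x ^ 2 / 4))
  intro m
  rw [div_le_div_iff₀ (by positivity) (by positivity)]
  have h1 : (1:ℝ) ≤ (m.factorial : ℝ) := by
    exact_mod_cast Nat.one_le_iff_ne_zero.mpr m.factorial_ne_zero
  have h2 : (0:ℝ) ≤ (x ^ 2 / 4) ^ m := by positivity
  nlinarith [mul_le_mul_of_nonneg_left (by nlinarith : (m.factorial:ℝ) ≤ (m.factorial:ℝ)^2) h2]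

lemma geg_abs_le (ν : ℝ) (hν : 0 ≤ ν) (n : ℕ) (hn : 1 ≤ n) (α : ℝ) (hα : |α| ≤ 1) :
    |gegenbauer ν n α| ≤ rhoNu ν * ∑ m ∈ Finset.range (n / 2 + 1),
      Real.Gamma (ν + n - m) * 2 ^ (n - 2 * m) / ((m.factorial : ℝ) * ((n - 2 * m).factorial : ℝ)) := by
  have key : ∀ m ∈ Finset.range (n / 2 + 1),
      |(-1 : ℝ) ^ m * Real.Gamma (ν + n - m) * (2 * α) ^ (n - 2 * m) /
        ((m.factorial : ℝ) * ((n - 2 * m).factorial : ℝ))| ≤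
      Real.Gamma (ν + n - m) * 2 ^ (n - 2 * m) /
        ((m.factorial : ℝ) * ((n - 2 * m).factorial : ℝ)) := by
    intro m hm
    rw [Finset.mem_range] at hm
    have hmn : 2 * m ≤ n := by omega
    have hm1 : m + 1 ≤ n := by omega
    have hΓpos : 0 < Real.Gamma (ν + n - m) := by
      apply Real.Gamma_pos_of_pos
      have : (m : ℝ) + 1 ≤ (n : ℝ) := by exact_mod_cast hm1
      linarith
    rw [abs_div, abs_mul, abs_mul, abs_pow, abs_pow, abs_neg, abs_one, one_pow, one_mul]
    rw [abs_of_pos hΓpos]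
    have hden : |(m.factorial : ℝ) * ((n - 2 * m).factorial : ℝ)| =
        (m.factorial : ℝ) * ((n - 2 * m).factorial : ℝ) := by
      apply abs_of_pos; positivity
    rw [hden]
    have h2α : |2 * α| ≤ 2 := by
      rw [abs_mul]; simp only [abs_two]
      nlinarith
    gcongr
  rcases eq_or_lt_of_le hν with hν0 | hνpos
  · -- ν = 0
    rw [gegenbauer, rhoNu, if_pos hν0.symm, if_pos hν0.symm, if_neg (by omega : ¬ n = 0), one_mul]
    have hrw : ∀ m ∈ Finset.range (n / 2 + 1),
        (-1 : ℝ) ^ m * Real.Gamma ((n : ℝ) - m) * (2 * α) ^ (n - 2 * m) /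
          (Real.Gamma ((m : ℝ) + 1) * Real.Gamma ((n : ℝ) - 2 * m + 1)) =
        (-1 : ℝ) ^ m * Real.Gamma (ν + n - m) * (2 * α) ^ (n - 2 * m) /
          ((m.factorial : ℝ) * ((n - 2 * m).factorial : ℝ)) := by
      intro m hm
      rw [Finset.mem_range] at hm
      have hmn : 2 * m ≤ n := by omega
      have h1 : Real.Gamma ((m : ℝ) + 1) = (m.factorial : ℝ) := Real.Gamma_nat_eq_factorial m
      have h2 : Real.Gamma ((n : ℝ) - 2 * m + 1) = ((n - 2 * m).factorial : ℝ) := by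
        have : (n : ℝ) - 2 * m = ((n - 2 * m : ℕ) : ℝ) := by
          push_cast [hmn]; ring
        rw [this, Real.Gamma_nat_eq_factorial]
      rw [h1, h2, ← hν0, zero_add]
    rw [Finset.sum_congr rfl hrw]
    calc |∑ m ∈ Finset.range (n / 2 + 1), (-1 : ℝ) ^ m * Real.Gamma (ν + n - m) *
            (2 * α) ^ (n - 2 * m) / ((m.factorial : ℝ) * ((n - 2 * m).factorial : ℝ))|
        ≤ ∑ m ∈ Finset.range (n / 2 + 1), |(-1 : ℝ) ^ m * Real.Gamma (ν + n - m) *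
            (2 * α) ^ (n - 2 * m) / ((m.factorial : ℝ) * ((n - 2 * m).factorial : ℝ))| :=
          Finset.abs_sum_le_sum_abs _ _
      _ ≤ _ := Finset.sum_le_sum key
  · -- ν > 0
    have hνne : ν ≠ 0 := ne_of_gt hνpos
    rw [gegenbauer, rhoNu, if_neg hνne, if_neg hνne]
    rw [abs_mul]
    have hΓν : 0 < Real.Gamma ν := Real.Gamma_pos_of_pos hνpos
    rw [abs_of_pos (by positivity : (0:ℝ) < 1 / Real.Gamma ν)]
    apply mul_le_mul_of_nonneg_left _ (by positivity)
    calc |∑ m ∈ Finset.range (n / 2 + 1), (-1 : ℝ) ^ m * Real.Gamma (ν + n - m) *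
            (2 * α) ^ (n - 2 * m) / ((m.factorial : ℝ) * ((n - 2 * m).factorial : ℝ))|
        ≤ ∑ m ∈ Finset.range (n / 2 + 1), |(-1 : ℝ) ^ m * Real.Gamma (ν + n - m) *
            (2 * α) ^ (n - 2 * m) / ((m.factorial : ℝ) * ((n - 2 * m).factorial : ℝ))| :=
          Finset.abs_sum_le_sum_abs _ _
      _ ≤ _ := Finset.sum_le_sum key

lemma inner_bound (ν ξ : ℝ) (hν : 0 ≤ ν) (hξ : 0 ≤ ξ) (N : ℕ) (hN : 1 ≤ N) :
    (ν + N) * (∑ j ∈ Finset.range (N / 2 + 1),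
        Real.Gamma (ν + N - j) * 2 ^ (N - 2 * j) /
          ((j.factorial : ℝ) * ((N - 2 * j).factorial : ℝ))) * phiBessel ν N ξ ≤
      (2 : ℝ) ^ (-ν) * Real.exp ξ * ((2 * ξ) ^ N / (N.factorial : ℝ)) := by
  set f : ℕ → ℝ := fun m => ξ ^ (N + 2 * m) /
    ((2 : ℝ) ^ (ν + N + 2 * (m : ℝ)) * Real.Gamma ((m : ℝ) + 1) * Real.Gamma (ν + N + m + 1))
    with hf
  have hφ : phiBessel ν N ξ = ∑' m, f m := rfl
  set g : ℕ → ℝ := fun m => (ξ ^ 2 / 4) ^ m / ((m.factorial : ℝ)) ^ 2 with hg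
  have htwoν : (0:ℝ) < (2:ℝ) ^ (ν : ℝ) := Real.rpow_pos_of_pos two_pos ν
  have hNν : (0:ℝ) < ν + N := by
    have : (1:ℝ) ≤ N := by exact_mod_cast hN
    linarith
  -- coefficient per j
  set D : ℕ → ℝ := fun j => (2:ℝ) ^ (-ν) *
    (ξ ^ N / (4 ^ j * (j.factorial : ℝ) ^ 2 * ((N - 2 * j).factorial : ℝ))) with hD
  have hDnonneg : ∀ j, 0 ≤ D j := by
    intro j
    have : (0:ℝ) < (2:ℝ) ^ (-ν) := Real.rpow_pos_of_pos two_pos _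
    positivity
  have hgs : Summable g := summable_sq ξ
  have hgnonneg : ∀ m, 0 ≤ g m := fun m => by positivity
  have hG : ∑' m, g m ≤ Real.exp ξ := tsum_sq_le_exp ξ hξ
  have hGnonneg : 0 ≤ ∑' m, g m := tsum_nonneg hgnonneg
  -- step 1: per (j, m) bound
  have step1 : ∀ j, 2 * j ≤ N → ∀ m : ℕ,
      (ν + N) * (Real.Gamma (ν + N - j) * 2 ^ (N - 2 * j) /
        ((j.factorial : ℝ) * ((N - 2 * j).factorial : ℝ))) * f m ≤ D j * g m := by
    intro j hj m
    have hΓ' : 0 < Real.Gamma (ν + N + m + 1) := by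
      apply Real.Gamma_pos_of_pos; have : (0:ℝ) ≤ m := Nat.cast_nonneg m; linarith
    have hΓν : 0 < Real.Gamma (ν + N - j) := by
      apply Real.Gamma_pos_of_pos
      have h1 : (j : ℝ) + 1 ≤ (N : ℝ) := by exact_mod_cast (by omega : j + 1 ≤ N)
      linarith
    have h2 : (2:ℝ) ^ (ν + N + 2 * (m : ℝ)) = 2 ^ (ν:ℝ) * (2 ^ N * 4 ^ m) := by
      rw [Real.rpow_add two_pos, Real.rpow_add two_pos]
      rw [Real.rpow_natCast]
      have : (2:ℝ) ^ (2 * (m:ℝ)) = 4 ^ m := by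
        rw [show (2:ℝ) * (m:ℝ) = ((2 * m : ℕ) : ℝ) by push_cast; ring, Real.rpow_natCast,
          pow_mul]; norm_num
      rw [this]; ring
    have h3 : (2:ℝ) ^ (N - 2 * j) * 4 ^ j = 2 ^ N := by
      rw [show (4:ℝ) = 2 ^ 2 by norm_num, ← pow_mul, ← pow_add]
      congr 1; omega
    have h4 : (2:ℝ) ^ (-ν) = ((2:ℝ) ^ (ν:ℝ))⁻¹ := by
      rw [Real.rpow_neg (by norm_num : (0:ℝ) ≤ 2)]
    have h5 : ξ ^ (N + 2 * m) = ξ ^ N * (ξ ^ 2) ^ m := by rw [pow_add, pow_mul]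
    have h7 : Real.Gamma ((m:ℝ) + 1) = (m.factorial : ℝ) := Real.Gamma_nat_eq_factorial m
    have hA : (ν + N) * Real.Gamma (ν + N - j) * ((j.factorial : ℝ) * m.factorial) ≤
        Real.Gamma (ν + N + m + 1) := keyL ν hν N j m hN hj
    set K : ℝ := 2 ^ (N - 2 * j) * (ξ ^ N * (ξ ^ 2) ^ m) /
      ((j.factorial : ℝ) ^ 2 * ((N - 2 * j).factorial : ℝ) * ((m.factorial : ℝ)) ^ 2 *
        (2 ^ (ν:ℝ) * 2 ^ N * 4 ^ m)) with hK
    have hKnonneg : 0 ≤ K := by positivity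
    have hLHS : (ν + N) * (Real.Gamma (ν + N - j) * 2 ^ (N - 2 * j) /
        ((j.factorial : ℝ) * ((N - 2 * j).factorial : ℝ))) * f m =
        ((ν + N) * Real.Gamma (ν + N - j) * ((j.factorial : ℝ) * m.factorial)) * K /
          Real.Gamma (ν + N + m + 1) := by
      simp only [hf, hK, h2, h5, h7]
      have hfj : ((j.factorial : ℝ)) ≠ 0 := by positivity
      have hfm : ((m.factorial : ℝ)) ≠ 0 := by positivity
      have hfn : (((N - 2*j).factorial : ℝ)) ≠ 0 := by positivity
      field_simp
    have hRHS : D j * g m = K := by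
      simp only [hD, hg, hK, h4]
      rw [div_pow, ← pow_mul]
      rw [show ξ ^ (2 * m) = (ξ ^ 2) ^ m by rw [pow_mul]]
      rw [show (4:ℝ) ^ m = ((4:ℝ) ^ m) by rfl]
      rw [eq_div_iff (by positivity)]
      field_simp
      linear_combination (ξ ^ N * (ξ ^ 2) ^ m) * h3.symm
    rw [hLHS]
    rw [div_le_iff₀ hΓ']
    calc (ν + N) * Real.Gamma (ν + N - j) * ((j.factorial : ℝ) * m.factorial) * K
        ≤ Real.Gamma (ν + N + m + 1) * K := by
          apply mul_le_mul_of_nonneg_right hA hKnonneg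
      _ = D j * g m * Real.Gamma (ν + N + m + 1) := by rw [hRHS]; ring
  have hfnonneg : ∀ m : ℕ, 0 ≤ f m := by
    intro m
    simp only [hf]
    have h1 : (0:ℝ) < (2 : ℝ) ^ (ν + N + 2 * (m : ℝ)) := Real.rpow_pos_of_pos two_pos _
    have h2 : 0 < Real.Gamma ((m:ℝ) + 1) := by
      apply Real.Gamma_pos_of_pos; have : (0:ℝ) ≤ m := Nat.cast_nonneg m; linarith
    have h3 : 0 < Real.Gamma (ν + N + m + 1) := by
      apply Real.Gamma_pos_of_pos; have : (0:ℝ) ≤ m := Nat.cast_nonneg m; linarith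
    positivity
  have step2 : ∀ j ∈ Finset.range (N / 2 + 1),
      (ν + N) * (Real.Gamma (ν + N - j) * 2 ^ (N - 2 * j) /
        ((j.factorial : ℝ) * ((N - 2 * j).factorial : ℝ))) * (∑' m, f m) ≤
      D j * ∑' m, g m := by
    intro j hjmem
    rw [Finset.mem_range] at hjmem
    have hj2 : 2 * j ≤ N := by
      have := Nat.div_mul_le_self N 2
      omega
    have hΓν : 0 < Real.Gamma (ν + N - j) := by
      apply Real.Gamma_pos_of_pos
      have h1 : (j : ℝ) + 1 ≤ (N : ℝ) := by exact_mod_cast (by omega : j + 1 ≤ N)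
      linarith
    set c : ℝ := Real.Gamma (ν + N - j) * 2 ^ (N - 2 * j) /
        ((j.factorial : ℝ) * ((N - 2 * j).factorial : ℝ)) with hc
    have hcnonneg : 0 ≤ c := by positivity
    have hsum2 : Summable (fun m => D j * g m) := hgs.mul_left _
    have hsum1 : Summable (fun m => (ν + N) * c * f m) :=
      Summable.of_nonneg_of_le (fun m => by
          have := hfnonneg m; positivity)
        (step1 j hj2) hsum2
    calc (ν + N) * c * (∑' m, f m) = ∑' m, (ν + N) * c * f m := tsum_mul_left.symm
      _ ≤ ∑' m, D j * g m := Summable.tsum_le_tsum (step1 j hj2) hsum1 hsum2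
      _ = D j * ∑' m, g m := tsum_mul_left
  have hDle : ∀ j ∈ Finset.range (N / 2 + 1),
      D j ≤ (2:ℝ) ^ (-ν) * (ξ ^ N * (N.choose (2 * j)) / (N.factorial : ℝ)) := by
    intro j hjmem
    rw [Finset.mem_range] at hjmem
    have hj2 : 2 * j ≤ N := by
      have := Nat.div_mul_le_self N 2
      omega
    have hfact : (N.factorial : ℝ) ≤
        (N.choose (2 * j) : ℝ) * (4 ^ j * (j.factorial : ℝ) ^ 2 * ((N - 2 * j).factorial : ℝ)) := by
      have hid : (N.choose (2 * j)) * (2 * j).factorial * (N - 2 * j).factorial = N.factorial :=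
        Nat.choose_mul_factorial_mul_factorial hj2
      have hid' : (N.factorial : ℝ) =
          (N.choose (2 * j) : ℝ) * ((2 * j).factorial : ℝ) * ((N - 2 * j).factorial : ℝ) := by
        exact_mod_cast hid.symm
      rw [hid']
      have h2j := two_j_fact_le j
      have hch : (0:ℝ) ≤ (N.choose (2 * j) : ℝ) := Nat.cast_nonneg _
      have hnf : (0:ℝ) ≤ ((N - 2 * j).factorial : ℝ) := Nat.cast_nonneg _
      calc (N.choose (2 * j) : ℝ) * ((2 * j).factorial : ℝ) * ((N - 2 * j).factorial : ℝ)
          ≤ (N.choose (2 * j) : ℝ) * (4 ^ j * (j.factorial : ℝ) ^ 2) *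
              ((N - 2 * j).factorial : ℝ) := by
            apply mul_le_mul_of_nonneg_right (mul_le_mul_of_nonneg_left h2j hch) hnf
        _ = (N.choose (2 * j) : ℝ) * (4 ^ j * (j.factorial : ℝ) ^ 2 *
              ((N - 2 * j).factorial : ℝ)) := by ring
    have h2ν : (0:ℝ) < (2:ℝ) ^ (-ν) := Real.rpow_pos_of_pos two_pos _
    simp only [hD]
    apply mul_le_mul_of_nonneg_left _ (le_of_lt h2ν)
    rw [div_le_div_iff₀ (by positivity) (by positivity)]
    calc ξ ^ N * (N.factorial : ℝ)
        ≤ ξ ^ N * ((N.choose (2 * j) : ℝ) * (4 ^ j * (j.factorial : ℝ) ^ 2 *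
            ((N - 2 * j).factorial : ℝ))) := by
          apply mul_le_mul_of_nonneg_left hfact (by positivity)
      _ = ξ ^ N * (N.choose (2 * j) : ℝ) * (4 ^ j * (j.factorial : ℝ) ^ 2 *
            ((N - 2 * j).factorial : ℝ)) := by ring
  have hchoose : (∑ j ∈ Finset.range (N / 2 + 1), (N.choose (2 * j) : ℝ)) ≤ 2 ^ N := by
    have hnat : (∑ j ∈ Finset.range (N / 2 + 1), N.choose (2 * j)) ≤ 2 ^ N := by
      calc (∑ j ∈ Finset.range (N / 2 + 1), N.choose (2 * j))
          = ∑ k ∈ (Finset.range (N / 2 + 1)).image (fun j => 2 * j), N.choose k := by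
            rw [Finset.sum_image (by intros a _ b _ h; have h' : 2 * a = 2 * b := h; omega)]
        _ ≤ ∑ k ∈ Finset.range (N + 1), N.choose k := by
            apply Finset.sum_le_sum_of_subset
            intro k hk
            simp only [Finset.mem_image, Finset.mem_range] at hk ⊢
            obtain ⟨a, ha, rfl⟩ := hk
            have := Nat.div_mul_le_self N 2
            omega
        _ = 2 ^ N := Nat.sum_range_choose N
    calc (∑ j ∈ Finset.range (N / 2 + 1), (N.choose (2 * j) : ℝ))
        = ((∑ j ∈ Finset.range (N / 2 + 1), N.choose (2 * j) : ℕ) : ℝ) := by push_cast; ring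
      _ ≤ ((2 ^ N : ℕ) : ℝ) := by exact_mod_cast hnat
      _ = 2 ^ N := by push_cast; ring
  have h2ν : (0:ℝ) < (2:ℝ) ^ (-ν) := Real.rpow_pos_of_pos two_pos _
  calc (ν + N) * (∑ j ∈ Finset.range (N / 2 + 1),
        Real.Gamma (ν + N - j) * 2 ^ (N - 2 * j) /
          ((j.factorial : ℝ) * ((N - 2 * j).factorial : ℝ))) * phiBessel ν N ξ
      = ∑ j ∈ Finset.range (N / 2 + 1), (ν + N) * (Real.Gamma (ν + N - j) * 2 ^ (N - 2 * j) /
          ((j.factorial : ℝ) * ((N - 2 * j).factorial : ℝ))) * (∑' m, f m) := by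
        rw [hφ, Finset.mul_sum, Finset.sum_mul]
    _ ≤ ∑ j ∈ Finset.range (N / 2 + 1), D j * ∑' m, g m := Finset.sum_le_sum step2
    _ = (∑ j ∈ Finset.range (N / 2 + 1), D j) * ∑' m, g m := (Finset.sum_mul _ _ _).symm
    _ ≤ (∑ j ∈ Finset.range (N / 2 + 1),
          (2:ℝ) ^ (-ν) * (ξ ^ N * (N.choose (2 * j)) / (N.factorial : ℝ))) * Real.exp ξ := by
        apply mul_le_mul (Finset.sum_le_sum hDle) hG hGnonneg
        apply Finset.sum_nonneg
        intro j _
        positivity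
    _ ≤ (2:ℝ) ^ (-ν) * Real.exp ξ * ((2 * ξ) ^ N / (N.factorial : ℝ)) := by
        have hsum : (∑ j ∈ Finset.range (N / 2 + 1),
            (2:ℝ) ^ (-ν) * (ξ ^ N * (N.choose (2 * j)) / (N.factorial : ℝ))) =
            (2:ℝ) ^ (-ν) * (ξ ^ N / (N.factorial : ℝ)) *
              (∑ j ∈ Finset.range (N / 2 + 1), (N.choose (2 * j) : ℝ)) := by
          rw [Finset.mul_sum]
          apply Finset.sum_congr rfl
          intro j _
          ring
        rw [hsum]
        have h1 : (2:ℝ) ^ (-ν) * (ξ ^ N / (N.factorial : ℝ)) *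
            (∑ j ∈ Finset.range (N / 2 + 1), (N.choose (2 * j) : ℝ)) ≤
            (2:ℝ) ^ (-ν) * (ξ ^ N / (N.factorial : ℝ)) * 2 ^ N := by
          apply mul_le_mul_of_nonneg_left hchoose (by positivity)
        calc (2:ℝ) ^ (-ν) * (ξ ^ N / (N.factorial : ℝ)) *
              (∑ j ∈ Finset.range (N / 2 + 1), (N.choose (2 * j) : ℝ)) * Real.exp ξ
            ≤ (2:ℝ) ^ (-ν) * (ξ ^ N / (N.factorial : ℝ)) * 2 ^ N * Real.exp ξ := by
              apply mul_le_mul_of_nonneg_right h1 (le_of_lt (Real.exp_pos ξ))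
          _ = (2:ℝ) ^ (-ν) * Real.exp ξ * ((2 * ξ) ^ N / (N.factorial : ℝ)) := by
              rw [mul_pow]
              ring


/-- For every real `ν ≥ 0`, every real `α` with `|α| ≤ 1`, every `t ≥ 0` and every
`ξ ≥ 0`, the series `∑_{n=1}^∞ (ν+n) |C_n^ν(α)| e^(−n(n+2ν)t) φ_{ν,n}(ξ)` converges and
its sum is at most `ρ_ν 2^(−ν) e^(3ξ)`. -/
theorem gegenbauer_phi_exp_series_bound (ν : ℝ) (hν : 0 ≤ ν) (α : ℝ) (hα : |α| ≤ 1)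
    (t ξ : ℝ) (ht : 0 ≤ t) (hξ : 0 ≤ ξ) :
    Summable (fun n : ℕ => (ν + ((n + 1 : ℕ) : ℝ)) * |gegenbauer ν (n + 1) α| *
      Real.exp (-(((n + 1 : ℕ) : ℝ) * (((n + 1 : ℕ) : ℝ) + 2 * ν)) * t) *
      phiBessel ν (n + 1) ξ) ∧
    ∑' n : ℕ, (ν + ((n + 1 : ℕ) : ℝ)) * |gegenbauer ν (n + 1) α| *
        Real.exp (-(((n + 1 : ℕ) : ℝ) * (((n + 1 : ℕ) : ℝ) + 2 * ν)) * t) *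
        phiBessel ν (n + 1) ξ ≤
      rhoNu ν * (2 : ℝ) ^ (-ν) * Real.exp (3 * ξ) := by
  set F : ℕ → ℝ := fun n => (ν + ((n + 1 : ℕ) : ℝ)) * |gegenbauer ν (n + 1) α| *
      Real.exp (-(((n + 1 : ℕ) : ℝ) * (((n + 1 : ℕ) : ℝ) + 2 * ν)) * t) *
      phiBessel ν (n + 1) ξ with hF
  have hρ : 0 ≤ rhoNu ν := by
    rw [rhoNu]
    split_ifs with h
    · norm_num
    · have : 0 < Real.Gamma ν := Real.Gamma_pos_of_pos (lt_of_le_of_ne hν (Ne.symm h))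
      positivity
  have hφnonneg : ∀ n : ℕ, 0 ≤ phiBessel ν (n + 1) ξ := by
    intro n
    apply tsum_nonneg
    intro m
    have h1 : (0:ℝ) < (2 : ℝ) ^ (ν + ((n+1:ℕ):ℝ) + 2 * (m : ℝ)) := Real.rpow_pos_of_pos two_pos _
    have h2 : 0 < Real.Gamma ((m:ℝ) + 1) := by
      apply Real.Gamma_pos_of_pos; have : (0:ℝ) ≤ m := Nat.cast_nonneg m; linarith
    have h3 : 0 < Real.Gamma (ν + ((n+1:ℕ):ℝ) + m + 1) := by
      apply Real.Gamma_pos_of_pos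
      have h4 : (0:ℝ) ≤ m := Nat.cast_nonneg m
      have h5 : (0:ℝ) ≤ ((n+1:ℕ):ℝ) := Nat.cast_nonneg _
      linarith
    positivity
  have hνN : ∀ n : ℕ, (0:ℝ) ≤ ν + ((n + 1 : ℕ) : ℝ) := by
    intro n
    have : (0:ℝ) ≤ ((n+1:ℕ):ℝ) := Nat.cast_nonneg _
    linarith
  have hexp1 : ∀ n : ℕ,
      Real.exp (-(((n + 1 : ℕ) : ℝ) * (((n + 1 : ℕ) : ℝ) + 2 * ν)) * t) ≤ 1 := by
    intro n
    apply Real.exp_le_one_iff.mpr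
    have h1 : (0:ℝ) ≤ ((n+1:ℕ):ℝ) := Nat.cast_nonneg _
    have h2 : (0:ℝ) ≤ ((n+1:ℕ):ℝ) * (((n+1:ℕ):ℝ) + 2 * ν) := by positivity
    nlinarith
  set maj : ℕ → ℝ := fun n => rhoNu ν * ((2:ℝ) ^ (-ν) * Real.exp ξ *
      ((2 * ξ) ^ (n + 1) / ((n + 1).factorial : ℝ))) with hmaj
  have hFle : ∀ n : ℕ, F n ≤ maj n := by
    intro n
    have hB := geg_abs_le ν hν (n + 1) (by omega) α hα
    set B : ℝ := ∑ m ∈ Finset.range ((n + 1) / 2 + 1),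
        Real.Gamma (ν + ((n+1:ℕ):ℝ) - m) * 2 ^ ((n + 1) - 2 * m) /
          ((m.factorial : ℝ) * (((n + 1) - 2 * m).factorial : ℝ)) with hBdef
    have hBnonneg : 0 ≤ B := by
      apply Finset.sum_nonneg
      intro m hm
      rw [Finset.mem_range] at hm
      have hΓ : 0 < Real.Gamma (ν + ((n+1:ℕ):ℝ) - m) := by
        apply Real.Gamma_pos_of_pos
        have h1 : (m : ℝ) + 1 ≤ ((n+1:ℕ):ℝ) := by
          exact_mod_cast (by omega : m + 1 ≤ n + 1)
        linarith
      positivity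
    have hinner := inner_bound ν ξ hν hξ (n + 1) (by omega)
    have habs : (0:ℝ) ≤ |gegenbauer ν (n + 1) α| := abs_nonneg _
    have hexpnn : (0:ℝ) ≤
        Real.exp (-(((n + 1 : ℕ) : ℝ) * (((n + 1 : ℕ) : ℝ) + 2 * ν)) * t) :=
      le_of_lt (Real.exp_pos _)
    calc F n ≤ (ν + ((n + 1 : ℕ) : ℝ)) * (rhoNu ν * B) *
          Real.exp (-(((n + 1 : ℕ) : ℝ) * (((n + 1 : ℕ) : ℝ) + 2 * ν)) * t) *
          phiBessel ν (n + 1) ξ := by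
            apply mul_le_mul_of_nonneg_right _ (hφnonneg n)
            apply mul_le_mul_of_nonneg_right _ hexpnn
            exact mul_le_mul_of_nonneg_left hB (hνN n)
      _ ≤ (ν + ((n + 1 : ℕ) : ℝ)) * (rhoNu ν * B) * 1 * phiBessel ν (n + 1) ξ := by
            apply mul_le_mul_of_nonneg_right _ (hφnonneg n)
            apply mul_le_mul_of_nonneg_left (hexp1 n)
            have := hνN n
            positivity
      _ = rhoNu ν * ((ν + ((n + 1 : ℕ) : ℝ)) * B * phiBessel ν (n + 1) ξ) := by ring
      _ ≤ rhoNu ν * ((2:ℝ) ^ (-ν) * Real.exp ξ *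
            ((2 * ξ) ^ (n + 1) / (((n+1).factorial : ℝ)))) := by
            apply mul_le_mul_of_nonneg_left _ hρ
            exact hinner
  have hFnonneg : ∀ n : ℕ, 0 ≤ F n := by
    intro n
    have h1 := hνN n
    have h2 : (0:ℝ) ≤ |gegenbauer ν (n + 1) α| := abs_nonneg _
    have h3 : (0:ℝ) ≤ Real.exp (-(((n + 1 : ℕ) : ℝ) * (((n + 1 : ℕ) : ℝ) + 2 * ν)) * t) :=
      le_of_lt (Real.exp_pos _)
    have h4 := hφnonneg n
    exact mul_nonneg (mul_nonneg (mul_nonneg h1 h2) h3) h4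
  have hmajsum : Summable maj := by
    have h1 : Summable (fun n : ℕ => (2 * ξ) ^ n / (n.factorial : ℝ)) :=
      Real.summable_pow_div_factorial _
    have h2 : Summable (fun n : ℕ => (2 * ξ) ^ (n + 1) / ((n + 1).factorial : ℝ)) :=
      h1.comp_injective Nat.succ_injective
    exact (h2.mul_left _).mul_left _
  have hFsum : Summable F := Summable.of_nonneg_of_le hFnonneg hFle hmajsum
  refine ⟨hFsum, ?_⟩
  have htail : ∑' n : ℕ, (2 * ξ) ^ (n + 1) / ((n + 1).factorial : ℝ) ≤ Real.exp (2 * ξ) := by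
    apply Real.tsum_le_of_sum_range_le (fun n => by positivity)
    intro M
    have hsucc := Finset.sum_range_succ' (fun k => (2 * ξ) ^ k / (k.factorial : ℝ)) M
    have h0 : (0:ℝ) ≤ (2 * ξ) ^ 0 / ((Nat.factorial 0 : ℕ) : ℝ) := by positivity
    have hle : ∑ n ∈ Finset.range M, (2 * ξ) ^ (n + 1) / ((n + 1).factorial : ℝ) ≤
        ∑ k ∈ Finset.range (M + 1), (2 * ξ) ^ k / (k.factorial : ℝ) := by
      rw [hsucc]
      have h0' : (0:ℝ) ≤ (2 * ξ) ^ 0 / ((Nat.factorial 0 : ℕ) : ℝ) := by positivity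
      linarith
    exact hle.trans (Real.sum_le_exp_of_nonneg (by linarith) (M + 1))
  calc ∑' n, F n ≤ ∑' n, maj n := Summable.tsum_le_tsum hFle hFsum hmajsum
    _ = rhoNu ν * (2:ℝ) ^ (-ν) * Real.exp ξ *
          ∑' n : ℕ, (2 * ξ) ^ (n + 1) / ((n + 1).factorial : ℝ) := by
            rw [← tsum_mul_left]
            apply tsum_congr
            intro n
            simp only [hmaj]
            ring
    _ ≤ rhoNu ν * (2:ℝ) ^ (-ν) * Real.exp ξ * Real.exp (2 * ξ) := by
            apply mul_le_mul_of_nonneg_left htail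
            have h2ν : (0:ℝ) < (2:ℝ) ^ (-ν) := Real.rpow_pos_of_pos two_pos _
            positivity
    _ = rhoNu ν * (2 : ℝ) ^ (-ν) * Real.exp (3 * ξ) := by
            rw [mul_assoc (rhoNu ν * (2:ℝ) ^ (-ν)) _ _, ← Real.exp_add]
            ring_nf
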